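/- (Composition with side adaptive bound for EML-type guarantees) Let X, Y, Z be finite random variables. Suppose P_Y{y : ℓ(X→y) ≤ ε₁} ≥ 1−δ₁ and P_{YZ}{(y,z) : ℓ(X→z|y) ≤ ε₂} ≥ 1−δ₂. Then P_{YZ}{(y,z) : ℓ(X→(y,z)) ≤ ε₁+ε₂} ≥ 1 − δ₁ − δ₂. -/
import Mathlib

lemma log_sup_le_iff {α : Type*} {s : Finset α} (h : s.Nonempty) (f : α → ℝ)
    (hf : ∀ x ∈ s, 0 ≤ f x) (ε : ℝ) (hε : 0 ≤ ε) :
    Real.log (s.sup' h f) ≤ ε ↔ ∀ x ∈ s, f x ≤ Real.exp ε := by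
  constructor
  · intro hl x hx
    by_cases hsup : 0 < s.sup' h f
    · have : s.sup' h f ≤ Real.exp ε := by
        rw [← Real.exp_log hsup]; exact Real.exp_le_exp.2 hl
      exact le_trans (Finset.le_sup' f hx) this
    · exact le_trans (Finset.le_sup' f hx) (le_trans (not_lt.1 hsup) (Real.exp_pos ε).le)
  · intro hl
    have hsup : s.sup' h f ≤ Real.exp ε := Finset.sup'_le _ _ hl
    by_cases hsup0 : 0 < s.sup' h f
    · calc Real.log (s.sup' h f) ≤ Real.log (Real.exp ε) :=
            Real.log_le_log (by positivity) hsup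
        _ = ε := Real.log_exp ε
    · have : s.sup' h f = 0 := le_antisymm (not_lt.1 hsup0)
        (h.elim fun x hx => le_trans (hf x hx) (Finset.le_sup' f hx))
      rw [this, Real.log_zero]; exact hε

/-- Composition via union bound: (ε₁,δ₁) tail bound on ℓ(X→Y) and (ε₂,δ₂) tail bound
on ℓ(X→Z|Y) under P_{YZ} imply a (ε₁+ε₂, δ₁+δ₂) tail bound on ℓ(X→(Y,Z)). -/
theorem stmt_19 {α β γ : Type*} [Fintype α] [Fintype β] [Fintype γ]
    (p : α → β → γ → ℝ)
    (hp : ∀ x y z, 0 ≤ p x y z)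
    (hsum : ∑ x, ∑ y, ∑ z, p x y z = 1)
    (pX : α → ℝ) (hpX : ∀ x, pX x = ∑ y, ∑ z, p x y z)
    (pY : β → ℝ) (hpY : ∀ y, pY y = ∑ x, ∑ z, p x y z)
    (pXY : α → β → ℝ) (hpXY : ∀ x y, pXY x y = ∑ z, p x y z)
    (pYZ : β → γ → ℝ) (hpYZ : ∀ y z, pYZ y z = ∑ x, p x y z)
    (sX : Finset α) (hsX : ∀ x, x ∈ sX ↔ 0 < pX x) (hneX : sX.Nonempty)
    (sXY : β → Finset α) (hsXY : ∀ y x, x ∈ sXY y ↔ 0 < pXY x y)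
    (hneXY : ∀ y, 0 < pY y → (sXY y).Nonempty)
    (ε₁ ε₂ : ℝ) (hε₁ : 0 ≤ ε₁) (hε₂ : 0 ≤ ε₂)
    (δ₁ δ₂ : ℝ) (hδ₁ : 0 ≤ δ₁ ∧ δ₁ ≤ 1) (hδ₂ : 0 ≤ δ₂ ∧ δ₂ ≤ 1)
    (GY : Finset β)
    (hGY : ∀ y, y ∈ GY ↔
      Real.log (sX.sup' hneX fun x => pXY x y / (pX x * pY y)) ≤ ε₁)
    (h1 : 1 - δ₁ ≤ ∑ y ∈ GY, pY y)
    (GZ : Finset (β × γ))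
    (hGZ : ∀ q : β × γ, ∀ hy : 0 < pY q.1, (q ∈ GZ ↔
      Real.log ((sXY q.1).sup' (hneXY q.1 hy) fun x =>
        p x q.1 q.2 * pY q.1 / (pXY x q.1 * pYZ q.1 q.2)) ≤ ε₂))
    (h2 : 1 - δ₂ ≤ ∑ q ∈ GZ, pYZ q.1 q.2)
    (GYZ : Finset (β × γ))
    (hGYZ : ∀ q : β × γ, q ∈ GYZ ↔
      Real.log (sX.sup' hneX fun x => p x q.1 q.2 / (pX x * pYZ q.1 q.2)) ≤ ε₁ + ε₂) :
    1 - δ₁ - δ₂ ≤ ∑ q ∈ GYZ, pYZ q.1 q.2 := by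
  classical
  -- basic nonnegativity facts
  have hpYZ0 : ∀ y z, 0 ≤ pYZ y z := fun y z => by
    rw [hpYZ]; exact Finset.sum_nonneg fun x _ => hp x y z
  have hpY0 : ∀ y, 0 ≤ pY y := fun y => by
    rw [hpY]; exact Finset.sum_nonneg fun x _ => Finset.sum_nonneg fun z _ => hp x y z
  have hpXY0 : ∀ x y, 0 ≤ pXY x y := fun x y => by
    rw [hpXY]; exact Finset.sum_nonneg fun z _ => hp x y z
  have hpX0 : ∀ x, 0 ≤ pX x := fun x => by
    rw [hpX]; exact Finset.sum_nonneg fun y _ => Finset.sum_nonneg fun z _ => hp x y z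
  have hpYZ_le : ∀ y z, pYZ y z ≤ pY y := fun y z => by
    rw [hpY, hpYZ]
    exact Finset.sum_le_sum fun x _ =>
      Finset.single_le_sum (fun z' _ => hp x y z') (Finset.mem_univ z)
  have hp_le_pXY : ∀ x y z, p x y z ≤ pXY x y := fun x y z => by
    rw [hpXY]; exact Finset.single_le_sum (fun z' _ => hp x y z') (Finset.mem_univ z)
  have hpY_sum : ∀ y, pY y = ∑ z, pYZ y z := fun y => by
    rw [hpY]; simp_rw [hpYZ]; exact Finset.sum_comm
  have hsumY : ∑ y, pY y = 1 := by
    calc ∑ y, pY y = ∑ y, ∑ x, ∑ z, p x y z := by simp_rw [hpY]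
      _ = ∑ x, ∑ y, ∑ z, p x y z := Finset.sum_comm
      _ = 1 := hsum
  -- the good set
  set A : Finset (β × γ) :=
    GZ.filter (fun q => q.1 ∈ GY ∧ 0 < pYZ q.1 q.2) with hA
  -- A ⊆ GYZ
  have hAsub : A ⊆ GYZ := by
    intro q hq
    obtain ⟨y, z⟩ := q
    rw [hA, Finset.mem_filter] at hq
    obtain ⟨hqGZ, hyGY, hqpos⟩ := hq
    have hy : 0 < pY y := lt_of_lt_of_le hqpos (hpYZ_le y z)
    have hY := (log_sup_le_iff hneX _ (fun x hx => by
        have := (hsX x).1 hx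
        exact div_nonneg (hpXY0 x y) (by positivity)) ε₁ hε₁).1 ((hGY y).1 hyGY)
    have hZ := (log_sup_le_iff (hneXY y hy) _ (fun x hx => by
        have := (hsXY y x).1 hx
        exact div_nonneg (mul_nonneg (hp x y z) (hpY0 y))
          (mul_nonneg (hpXY0 x y) (hpYZ0 y z))) ε₂ hε₂).1 ((hGZ ⟨y, z⟩ hy).1 hqGZ)
    rw [hGYZ]
    rw [log_sup_le_iff hneX _ (fun x hx => by
        have := (hsX x).1 hx
        exact div_nonneg (hp x y z) (mul_nonneg (hpX0 x) (hpYZ0 y z)))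
        (ε₁ + ε₂) (by linarith)]
    intro x hx
    have hxpos : 0 < pX x := (hsX x).1 hx
    by_cases hxy : 0 < pXY x y
    · have hx2 : x ∈ sXY y := (hsXY y x).2 hxy
      have h1x : pXY x y ≤ Real.exp ε₁ * (pX x * pY y) :=
        (div_le_iff₀ (by positivity)).1 (hY x hx)
      have h2x : p x y z * pY y ≤ Real.exp ε₂ * (pXY x y * pYZ y z) :=
        (div_le_iff₀ (by positivity)).1 (hZ x hx2)
      rw [div_le_iff₀ (by positivity), Real.exp_add]
      have e1 : (0:ℝ) < Real.exp ε₁ := Real.exp_pos _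
      have e2 : (0:ℝ) < Real.exp ε₂ := Real.exp_pos _
      have key : Real.exp ε₂ * (pXY x y * pYZ y z) ≤
          Real.exp ε₂ * ((Real.exp ε₁ * (pX x * pY y)) * pYZ y z) := by
        apply mul_le_mul_of_nonneg_left _ e2.le
        exact mul_le_mul_of_nonneg_right h1x (hpYZ0 y z)
      have := le_trans h2x key
      have hfin : p x y z * pY y ≤ (Real.exp ε₁ * Real.exp ε₂ * (pX x * pYZ y z)) * pY y := by
        nlinarith
      exact le_of_mul_le_mul_right hfin hy
    · have : p x y z = 0 := le_antisymm
        (le_trans (hp_le_pXY x y z) (not_lt.1 hxy)) (hp x y z)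
      rw [this, zero_div]
      positivity
  -- sum over A bounds sum over GYZ
  have hb : ∑ q ∈ A, pYZ q.1 q.2 ≤ ∑ q ∈ GYZ, pYZ q.1 q.2 :=
    Finset.sum_le_sum_of_subset_of_nonneg hAsub (fun q _ _ => hpYZ0 q.1 q.2)
  -- union bound: ∑_{GZ} - ∑_A ≤ δ₁
  have hsplit : ∑ q ∈ GZ, pYZ q.1 q.2 - ∑ q ∈ A, pYZ q.1 q.2
      = ∑ q ∈ GZ \ A, pYZ q.1 q.2 :=
    (Finset.sum_sdiff_eq_sub (Finset.filter_subset _ _)).symm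
  have hstep : ∑ q ∈ GZ \ A, pYZ q.1 q.2
      ≤ ∑ q ∈ GZ \ A, (if q.1 ∈ GY then 0 else pYZ q.1 q.2) := by
    apply Finset.sum_le_sum
    intro q hq
    rw [Finset.mem_sdiff, hA, Finset.mem_filter] at hq
    by_cases hyG : q.1 ∈ GY
    · simp only [hyG, if_true]
      have : ¬ 0 < pYZ q.1 q.2 := fun h => hq.2 ⟨hq.1, hyG, h⟩
      linarith [not_lt.1 this]
    · simp [hyG]
  have hstep2 : ∑ q ∈ GZ \ A, (if q.1 ∈ GY then 0 else pYZ q.1 q.2)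
      ≤ ∑ q : β × γ, (if q.1 ∈ GY then 0 else pYZ q.1 q.2) := by
    apply Finset.sum_le_sum_of_subset_of_nonneg (Finset.subset_univ _)
    intro q _ _
    split
    exacts [le_rfl, hpYZ0 q.1 q.2]
  have hcompute : ∑ q : β × γ, (if q.1 ∈ GY then 0 else pYZ q.1 q.2) ≤ δ₁ := by
    rw [Fintype.sum_prod_type]
    have : ∀ y, ∑ z, (if y ∈ GY then 0 else pYZ y z)
        = (if y ∈ GY then 0 else pY y) := by
      intro y
      split
      · simp
      · rw [hpY_sum]
    simp_rw [this]
    have hsw : ∀ y, (if y ∈ GY then (0:ℝ) else pY y)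
        = pY y - (if y ∈ GY then pY y else 0) := by
      intro y; split <;> ring
    simp_rw [hsw]
    rw [Finset.sum_sub_distrib, hsumY, Finset.sum_ite_mem, Finset.univ_inter]
    linarith
  linarith [hsplit ▸ le_trans hstep hstep2, hb, h2, hcompute]
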